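/- Let u = u₀ t_{i₁}^{α₁} u₁ ⋯ t_{i_p}^{α_p} u_p and v = v₀ t_{j₁}^{β₁} v₁ ⋯ t_{j_q}^{β_q} v_q be reduced words. Let d = d(u,v) be the largest number d ≥ 0 such that (a) A_{i_{p−d+1}}(α_{p−d+1}) = A_{j_d}(−β_d) (with the convention A_{i_{p+1}}(α_{p+1}) = A_{j_0}(−β_0) = 1), and (b) there exists c ∈ A_{j_d}(−β_d) with t_{i_{p−d+1}}^{α_{p−d+1}} u_{p−d+1} ⋯ t_{i_p}^{α_p} u_p v₀ t_{j₁}^{β₁} ⋯ v_{d−1} t_{j_d}^{β_d} = c in G (condition (b) holds for d = 0). Let c(u,v) ∈ A_{j_d}(−β_d) be the element c in (b) for d = d(u,v). Then the word u₀ t_{i₁}^{α₁} u₁ ⋯ t_{i_{p−d}}^{α_{p−d}} (u_{p−d} · c(u,v) · v_d) t_{j_{d+1}}^{β_{d+1}} v_{d+1} ⋯ t_{j_q}^{β_q} v_q is a reduced word that is equal to uv in G. -/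

import Mathlib

/-!
Multiple HNN-extension `G = ⟨H, t₁, …, tₙ | tᵢ⁻¹ a tᵢ = φᵢ(a) (a ∈ Aᵢ)⟩`, presented
as a `PresentedGroup` on the alphabet `H ⊕ ι`.
-/

/-- Relators of the multiple HNN-extension presentation. -/
def hnnRels {H : Type*} [Group H] {ι : Type*} (A B : ι → Subgroup H)
    (φ : ∀ i, A i ≃* B i) : Set (FreeGroup (H ⊕ ι)) :=
  {r | ∃ h₁ h₂ : H, r = FreeGroup.of (Sum.inl h₁) * FreeGroup.of (Sum.inl h₂) *
        (FreeGroup.of (Sum.inl (h₁ * h₂)))⁻¹} ∪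
  {r | ∃ (i : ι) (a : A i), r = (FreeGroup.of (Sum.inr i))⁻¹ *
        FreeGroup.of (Sum.inl (a : H)) * FreeGroup.of (Sum.inr i) *
        (FreeGroup.of (Sum.inl ((φ i a : B i) : H)))⁻¹}

/-- The multiple HNN-extension of `H`. -/
abbrev MHNN {H : Type*} [Group H] {ι : Type*} (A B : ι → Subgroup H)
    (φ : ∀ i, A i ≃* B i) :=
  PresentedGroup (hnnRels A B φ)

/-- Canonical generators: `Sum.inl h` for `h ∈ H`, `Sum.inr i` for the stable letter `tᵢ`. -/
def gen {H : Type*} [Group H] {ι : Type*} (A B : ι → Subgroup H)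
    (φ : ∀ i, A i ≃* B i) (x : H ⊕ ι) : MHNN A B φ :=
  PresentedGroup.of x

/-- The element represented by the word `u₀ t_{idx 0}^{e 0} u₁ ⋯ t_{idx (ℓ-1)}^{e (ℓ-1)} u_ℓ`. -/
def wordProd {H : Type*} [Group H] {ι : Type*} (A B : ι → Subgroup H)
    (φ : ∀ i, A i ≃* B i) (ℓ : ℕ) (u : ℕ → H) (idx : ℕ → ι) (e : ℕ → ℤ) :
    MHNN A B φ :=
  gen A B φ (Sum.inl (u 0)) *
    ((List.range ℓ).map fun k =>
      gen A B φ (Sum.inr (idx k)) ^ e k * gen A B φ (Sum.inl (u (k + 1)))).prod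

/-- `side A B i e` is `A i (e)`, i.e. `A i` if `e = 1` and `B i` if `e = -1`. -/
def side {H : Type*} [Group H] {ι : Type*} (A B : ι → Subgroup H) (i : ι) (e : ℤ) :
    Subgroup H :=
  if e = 1 then A i else B i

/-- The word is reduced: exponents are `±1`, no factor `tᵢ^{-α} w tᵢ^{α}` with `w ∈ A i (α)`. -/
def ReducedWord {H : Type*} [Group H] {ι : Type*} (A B : ι → Subgroup H)
    (ℓ : ℕ) (u : ℕ → H) (idx : ℕ → ι) (e : ℕ → ℤ) : Prop :=
  (∀ k < ℓ, e k = 1 ∨ e k = -1) ∧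
  ∀ k, k + 1 < ℓ → idx k = idx (k + 1) → e k = -e (k + 1) →
    u (k + 1) ∉ side A B (idx k) (e (k + 1))

/-- The element of `G` represented by the "middle" word
`t_{i_{p-d+1}}^{α_{p-d+1}} u_{p-d+1} ⋯ t_{i_p}^{α_p} u_p v₀ t_{j_1}^{β_1} ⋯ v_{d-1} t_{j_d}^{β_d}`
(`0`-based: the last `d` stable letters of `u` together with `v₀ ⋯ v_{d-1}` and the first
`d` stable letters of `v`). -/
def midProd {H : Type*} [Group H] {ι : Type*} (A B : ι → Subgroup H)
    (φ : ∀ i, A i ≃* B i) (p : ℕ) (u : ℕ → H) (iu : ℕ → ι) (eu : ℕ → ℤ)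
    (v : ℕ → H) (iv : ℕ → ι) (ev : ℕ → ℤ) (d : ℕ) : MHNN A B φ :=
  ((List.range d).map fun k =>
      gen A B φ (Sum.inr (iu (p - d + k))) ^ eu (p - d + k) *
        gen A B φ (Sum.inl (u (p - d + k + 1)))).prod *
  ((List.range d).map fun k =>
      gen A B φ (Sum.inl (v k)) * gen A B φ (Sum.inr (iv k)) ^ ev k).prod

/-- The cancellation condition (a) ∧ (b) of the lemma, for a given `d ≥ 0`
(it holds trivially for `d = 0`). -/
def CancelCond {H : Type*} [Group H] {ι : Type*} (A B : ι → Subgroup H)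
    (φ : ∀ i, A i ≃* B i) (p q : ℕ) (u : ℕ → H) (iu : ℕ → ι) (eu : ℕ → ℤ)
    (v : ℕ → H) (iv : ℕ → ι) (ev : ℕ → ℤ) (d : ℕ) : Prop :=
  d = 0 ∨ (1 ≤ d ∧ d ≤ p ∧ d ≤ q ∧
    side A B (iu (p - d)) (eu (p - d)) = side A B (iv (d - 1)) (-(ev (d - 1))) ∧
    ∃ c ∈ side A B (iv (d - 1)) (-(ev (d - 1))),
      midProd A B φ p u iu eu v iv ev d = gen A B φ (Sum.inl c))

section helpers
variable {H : Type*} [Group H] {ι : Type*} (A B : ι → Subgroup H) (φ : ∀ i, A i ≃* B i)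

lemma rel_one {r : FreeGroup (H ⊕ ι)} (hr : r ∈ hnnRels A B φ) :
    (QuotientGroup.mk r : MHNN A B φ) = 1 := by
  rw [QuotientGroup.eq_one_iff]
  exact Subgroup.subset_normalClosure hr

lemma gen_inl_mul (h₁ h₂ : H) :
    gen A B φ (Sum.inl h₁) * gen A B φ (Sum.inl h₂) = gen A B φ (Sum.inl (h₁ * h₂)) := by
  have := rel_one A B φ (r := FreeGroup.of (Sum.inl h₁) * FreeGroup.of (Sum.inl h₂) *
        (FreeGroup.of (Sum.inl (h₁ * h₂)))⁻¹) (Or.inl ⟨h₁, h₂, rfl⟩)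
  have h : (QuotientGroup.mk (FreeGroup.of (Sum.inl h₁) * FreeGroup.of (Sum.inl h₂) *
        (FreeGroup.of (Sum.inl (h₁ * h₂) : H ⊕ ι))⁻¹) : MHNN A B φ)
      = gen A B φ (Sum.inl h₁) * gen A B φ (Sum.inl h₂) * (gen A B φ (Sum.inl (h₁ * h₂)))⁻¹ := rfl
  rw [h] at this
  exact mul_inv_eq_one.mp this

lemma gen_inl_one : gen A B φ (Sum.inl (1 : H)) = 1 := by
  have := gen_inl_mul A B φ (1 : H) 1
  rw [mul_one] at this
  exact (mul_eq_right.mp this)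

lemma gen_rel (i : ι) (a : A i) :
    (gen A B φ (Sum.inr i))⁻¹ * gen A B φ (Sum.inl (a : H)) * gen A B φ (Sum.inr i)
      = gen A B φ (Sum.inl ((φ i a : B i) : H)) := by
  have := rel_one A B φ (r := (FreeGroup.of (Sum.inr i))⁻¹ *
        FreeGroup.of (Sum.inl (a : H)) * FreeGroup.of (Sum.inr i) *
        (FreeGroup.of (Sum.inl ((φ i a : B i) : H)))⁻¹) (Or.inr ⟨i, a, rfl⟩)
  have h : (QuotientGroup.mk ((FreeGroup.of (Sum.inr i))⁻¹ *
        FreeGroup.of (Sum.inl (a : H)) * FreeGroup.of (Sum.inr i) *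
        (FreeGroup.of (Sum.inl ((φ i a : B i) : H) : H ⊕ ι))⁻¹) : MHNN A B φ)
      = (gen A B φ (Sum.inr i))⁻¹ * gen A B φ (Sum.inl (a : H)) * gen A B φ (Sum.inr i) *
        (gen A B φ (Sum.inl ((φ i a : B i) : H)))⁻¹ := rfl
  rw [h] at this
  exact mul_inv_eq_one.mp this

@[simp] lemma side_one (i : ι) : side A B i 1 = A i := by simp [side]
@[simp] lemma side_neg_one (i : ι) : side A B i (-1) = B i := by simp [side]

lemma conj_side (i : ι) (ε : ℤ) (hε : ε = 1 ∨ ε = -1) (w : H) (hw : w ∈ side A B i ε) :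
    ∃ c ∈ side A B i (-ε),
      (gen A B φ (Sum.inr i)) ^ (-ε) * gen A B φ (Sum.inl w) * (gen A B φ (Sum.inr i)) ^ ε
        = gen A B φ (Sum.inl c) := by
  rcases hε with rfl | rfl
  · rw [side_one] at hw
    refine ⟨((φ i ⟨w, hw⟩ : B i) : H), by simp [(φ i ⟨w, hw⟩).2], ?_⟩
    have := gen_rel A B φ i ⟨w, hw⟩
    simpa [zpow_neg, zpow_one] using this
  · rw [side_neg_one] at hw
    refine ⟨(((φ i).symm ⟨w, hw⟩ : A i) : H), by simp [((φ i).symm ⟨w, hw⟩).2], ?_⟩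
    have := gen_rel A B φ i ((φ i).symm ⟨w, hw⟩)
    rw [MulEquiv.apply_symm_apply] at this
    have h2 : gen A B φ (Sum.inl w) =
        (gen A B φ (Sum.inr i))⁻¹ * gen A B φ (Sum.inl (((φ i).symm ⟨w, hw⟩ : A i) : H)) *
          gen A B φ (Sum.inr i) := this.symm
    rw [h2, neg_neg, zpow_one, zpow_neg, zpow_one]
    group

end helpers

section lists
variable {G : Type*} [Monoid G]

lemma prod_range_succ_list (f : ℕ → G) (n : ℕ) :
    ((List.range (n+1)).map f).prod = ((List.range n).map f).prod * f n := by
  rw [List.range_succ]; simp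

lemma prod_range_succ'_list (f : ℕ → G) (n : ℕ) :
    ((List.range (n+1)).map f).prod = f 0 * ((List.range n).map fun k => f (k+1)).prod := by
  rw [List.range_succ_eq_map, List.map_cons, List.map_map, List.prod_cons]
  rfl

lemma tele (f g : ℕ → G) (n : ℕ) :
    f 0 * ((List.range n).map fun k => g k * f (k+1)).prod
      = ((List.range n).map fun k => f k * g k).prod * f n := by
  induction n with
  | zero => simp
  | succ m ih =>
    rw [prod_range_succ_list, prod_range_succ_list, ← mul_assoc (f 0), ih]
    simp [mul_assoc]

lemma shift (g g' f f' : ℕ → G) (x : G) (n : ℕ)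
    (hf : ∀ k < n, f' k = f k) (hg : ∀ k < n, g' k = g k) (hx : f' n = f n * x) :
    f 0 * ((List.range n).map fun k => g k * f (k+1)).prod * x
      = f' 0 * ((List.range n).map fun k => g' k * f' (k+1)).prod := by
  cases n with
  | zero => simp [hx, hf, hg]
  | succ m =>
    rw [prod_range_succ_list, prod_range_succ_list]
    have h1 : ((List.range m).map fun k => g' k * f' (k+1)).prod
        = ((List.range m).map fun k => g k * f (k+1)).prod := by
      refine congrArg List.prod (List.map_congr_left fun a ha => ?_)
      have ha' := List.mem_range.mp ha
      rw [hf (a+1) (by omega), hg a (by omega)]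
    rw [h1, hf 0 (by omega), hg m (by omega), hx]
    simp [mul_assoc]

end lists

section words
variable {H : Type*} [Group H] {ι : Type*} (A B : ι → Subgroup H) (φ : ∀ i, A i ≃* B i)

lemma wordProd_add (ℓ₁ ℓ₂ : ℕ) (u : ℕ → H) (idx : ℕ → ι) (e : ℕ → ℤ) :
    wordProd A B φ (ℓ₁ + ℓ₂) u idx e = wordProd A B φ ℓ₁ u idx e *
      ((List.range ℓ₂).map fun k =>
        gen A B φ (Sum.inr (idx (ℓ₁ + k))) ^ e (ℓ₁ + k) *
          gen A B φ (Sum.inl (u (ℓ₁ + k + 1)))).prod := by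
  unfold wordProd
  rw [List.range_add, List.map_append, List.prod_append, List.map_map, mul_assoc]
  rfl

lemma midProd_zero (p : ℕ) (u : ℕ → H) (iu : ℕ → ι) (eu : ℕ → ℤ)
    (v : ℕ → H) (iv : ℕ → ι) (ev : ℕ → ℤ) :
    midProd A B φ p u iu eu v iv ev 0 = 1 := by
  simp [midProd]

lemma midProd_succ (p : ℕ) (u : ℕ → H) (iu : ℕ → ι) (eu : ℕ → ℤ)
    (v : ℕ → H) (iv : ℕ → ι) (ev : ℕ → ℤ) (d : ℕ) (hd : d < p) :
    midProd A B φ p u iu eu v iv ev (d+1) =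
      gen A B φ (Sum.inr (iu (p - (d+1)))) ^ eu (p - (d+1)) *
      gen A B φ (Sum.inl (u (p - (d+1) + 1))) *
      midProd A B φ p u iu eu v iv ev d *
      (gen A B φ (Sum.inl (v d)) * gen A B φ (Sum.inr (iv d)) ^ ev d) := by
  unfold midProd
  rw [prod_range_succ'_list, prod_range_succ_list]
  have harith : ∀ k : ℕ, p - (d+1) + (k+1) = p - d + k := fun k => by omega
  have h1 : ((List.range d).map fun k =>
      gen A B φ (Sum.inr (iu (p - (d+1) + (k+1)))) ^ eu (p - (d+1) + (k+1)) *
        gen A B φ (Sum.inl (u (p - (d+1) + (k+1) + 1)))).prod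
      = ((List.range d).map fun k =>
      gen A B φ (Sum.inr (iu (p - d + k))) ^ eu (p - d + k) *
        gen A B φ (Sum.inl (u (p - d + k + 1)))).prod := by
    refine congrArg List.prod (List.map_congr_left fun a _ => ?_)
    rw [harith a]
  simp only [add_zero] at *
  rw [h1]
  simp [mul_assoc]

end words

/-- If `d = d(u,v)` is the largest `d` satisfying the cancellation
condition and `c = c(u,v)` is the corresponding connecting element, then
`u₀ t^{α_1} ⋯ t^{α_{p-d}} (u_{p-d} c v_d) t^{β_{d+1}} v_{d+1} ⋯ t^{β_q} v_q`
is a reduced word equal to `u v` in `G`. -/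
theorem reduce_concat {H : Type*} [Group H] {ι : Type*}
    (A B : ι → Subgroup H) (φ : ∀ i, A i ≃* B i)
    (p q : ℕ) (u v : ℕ → H) (iu iv : ℕ → ι) (eu ev : ℕ → ℤ)
    (hu : ReducedWord A B p u iu eu) (hv : ReducedWord A B q v iv ev)
    (d : ℕ) (hd : CancelCond A B φ p q u iu eu v iv ev d)
    (hmax : ∀ d', CancelCond A B φ p q u iu eu v iv ev d' → d' ≤ d)
    (c : H) (hc0 : d = 0 → c = 1)
    (hc1 : 1 ≤ d → c ∈ side A B (iv (d - 1)) (-(ev (d - 1))) ∧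
        midProd A B φ p u iu eu v iv ev d = gen A B φ (Sum.inl c)) :
    ReducedWord A B ((p - d) + (q - d))
      (fun k => if k < p - d then u k else
        if k = p - d then u (p - d) * c * v d else v (k - (p - d) + d))
      (fun k => if k < p - d then iu k else iv (k - (p - d) + d))
      (fun k => if k < p - d then eu k else ev (k - (p - d) + d)) ∧
    wordProd A B φ ((p - d) + (q - d))
      (fun k => if k < p - d then u k else
        if k = p - d then u (p - d) * c * v d else v (k - (p - d) + d))
      (fun k => if k < p - d then iu k else iv (k - (p - d) + d))
      (fun k => if k < p - d then eu k else ev (k - (p - d) + d)) =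
    wordProd A B φ p u iu eu * wordProd A B φ q v iv ev := by

  have hdp : d ≤ p := by rcases hd with rfl | ⟨_, h, _⟩ <;> omega
  have hdq : d ≤ q := by rcases hd with rfl | ⟨_, _, h, _⟩ <;> omega
  have hcmid : midProd A B φ p u iu eu v iv ev d = gen A B φ (Sum.inl c) := by
    rcases Nat.eq_zero_or_pos d with rfl | hd1
    · rw [midProd_zero, hc0 rfl, gen_inl_one]
    · exact (hc1 hd1).2
  constructor
  · -- reducedness
    constructor
    · intro k hk
      by_cases h : k < p - d
      · simpa [h] using hu.1 k (by omega)
      · simpa [h] using hv.1 (k - (p - d) + d) (by omega)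
    · intro k hk hidx hexp hmem
      by_cases h1 : k + 1 < p - d
      · have h0 : k < p - d := by omega
        simp only [if_pos h0, if_pos h1] at hidx hexp hmem
        exact hu.2 k (by omega) hidx hexp hmem
      by_cases h2 : p - d ≤ k
      · have h0 : ¬ k < p - d := by omega
        have h3 : ¬ k + 1 = p - d := by omega
        have e1 : k + 1 - (p - d) + d = (k - (p - d) + d) + 1 := by omega
        simp only [if_neg h0, if_neg h1, if_neg h3, e1] at hidx hexp hmem
        exact hv.2 (k - (p - d) + d) (by omega) hidx hexp hmem
      · -- junction: k + 1 = p - d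
        have hk1 : k + 1 = p - d := by omega
        have h0 : k < p - d := by omega
        have hPpos : d < p := by omega
        have hQpos : d < q := by omega
        have h3 : ¬ (p - d < p - d) := by omega
        simp only [if_pos h0, hk1, if_neg h3, eq_self_iff_true, if_true, Nat.sub_self,
          zero_add] at hidx hexp hmem
        -- hidx : iu k = iv d, hexp : eu k = -ev d,
        -- hmem : u (p-d) * c * v d ∈ side A B (iu k) (ev d)
        rw [hidx] at hmem
        obtain ⟨c', hc', heq⟩ := conj_side A B φ (iv d) (ev d) (hv.1 d hQpos)
          (u (p - d) * c * v d) hmem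
        have hkval : p - (d + 1) = k := by omega
        have hkval1 : p - (d + 1) + 1 = p - d := by omega
        have hmid1 : midProd A B φ p u iu eu v iv ev (d + 1) = gen A B φ (Sum.inl c') := by
          rw [midProd_succ A B φ p u iu eu v iv ev d hPpos, hkval1, hkval, hcmid,
            hidx, hexp]
          rw [← heq]
          have m1 : gen A B φ (Sum.inl (u (p - d) * c * v d))
              = gen A B φ (Sum.inl (u (p - d))) * gen A B φ (Sum.inl c) *
                gen A B φ (Sum.inl (v d)) := by
            rw [gen_inl_mul, gen_inl_mul]
          rw [m1]
          simp [mul_assoc]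
        have hcc : CancelCond A B φ p q u iu eu v iv ev (d + 1) := by
          right
          simp only [Nat.add_sub_cancel]
          refine ⟨by omega, by omega, by omega, ?_, c', hc', hmid1⟩
          rw [hkval, hidx, hexp]
        have := hmax (d + 1) hcc
        omega
  · -- product equality
    have hp : p = (p - d) + d := by omega
    have hq : q = d + (q - d) := by omega
    have hU : wordProd A B φ p u iu eu = wordProd A B φ (p - d) u iu eu *
        ((List.range d).map fun k =>
          gen A B φ (Sum.inr (iu (p - d + k))) ^ eu (p - d + k) *
            gen A B φ (Sum.inl (u (p - d + k + 1)))).prod := by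
      conv_lhs => rw [hp]
      exact wordProd_add A B φ (p - d) d u iu eu
    have hV : wordProd A B φ q v iv ev = wordProd A B φ d v iv ev *
        ((List.range (q - d)).map fun k =>
          gen A B φ (Sum.inr (iv (d + k))) ^ ev (d + k) *
            gen A B φ (Sum.inl (v (d + k + 1)))).prod := by
      conv_lhs => rw [hq]
      exact wordProd_add A B φ d (q - d) v iv ev
    have hVd : wordProd A B φ d v iv ev =
        ((List.range d).map fun k =>
          gen A B φ (Sum.inl (v k)) * gen A B φ (Sum.inr (iv k)) ^ ev k).prod *
          gen A B φ (Sum.inl (v d)) := by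
      unfold wordProd
      exact tele (fun k => gen A B φ (Sum.inl (v k)))
        (fun k => gen A B φ (Sum.inr (iv k)) ^ ev k) d
    rw [wordProd_add, hU, hV, hVd]
    -- identify the tail products
    have hPW2 : ((List.range (q - d)).map fun k =>
        gen A B φ (Sum.inr ((fun k => if k < p - d then iu k else iv (k - (p - d) + d))
          ((p - d) + k))) ^
          ((fun k => if k < p - d then eu k else ev (k - (p - d) + d)) ((p - d) + k)) *
        gen A B φ (Sum.inl ((fun k => if k < p - d then u k else
          if k = p - d then u (p - d) * c * v d else v (k - (p - d) + d))
          ((p - d) + k + 1)))).prod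
        = ((List.range (q - d)).map fun k =>
          gen A B φ (Sum.inr (iv (d + k))) ^ ev (d + k) *
            gen A B φ (Sum.inl (v (d + k + 1)))).prod := by
      refine congrArg List.prod (List.map_congr_left fun a ha => ?_)
      have h1 : ¬ (p - d + a < p - d) := by omega
      have h2 : ¬ (p - d + a + 1 < p - d) := by omega
      have h3 : ¬ (p - d + a + 1 = p - d) := by omega
      have e1 : p - d + a - (p - d) + d = d + a := by omega
      have e2 : p - d + a + 1 - (p - d) + d = d + a + 1 := by omega
      simp only [if_neg h1, if_neg h2, if_neg h3, e1, e2]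
    rw [hPW2]
    -- identify the head
    have hhead : wordProd A B φ (p - d)
        (fun k => if k < p - d then u k else
          if k = p - d then u (p - d) * c * v d else v (k - (p - d) + d))
        (fun k => if k < p - d then iu k else iv (k - (p - d) + d))
        (fun k => if k < p - d then eu k else ev (k - (p - d) + d))
        = wordProd A B φ (p - d) u iu eu * gen A B φ (Sum.inl (c * v d)) := by
      symm
      unfold wordProd
      rw [mul_assoc]
      rw [← mul_assoc (gen A B φ (Sum.inl (u 0)))]
      refine shift (fun k => gen A B φ (Sum.inr (iu k)) ^ eu k)
        (fun k => gen A B φ (Sum.inr ((fun k => if k < p - d then iu k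
            else iv (k - (p - d) + d)) k)) ^
          ((fun k => if k < p - d then eu k else ev (k - (p - d) + d)) k))
        (fun k => gen A B φ (Sum.inl (u k)))
        (fun k => gen A B φ (Sum.inl ((fun k => if k < p - d then u k else
          if k = p - d then u (p - d) * c * v d else v (k - (p - d) + d)) k)))
        (gen A B φ (Sum.inl (c * v d))) (p - d) ?_ ?_ ?_
      · intro k hk; simp only [if_pos hk]
      · intro k hk; simp only [if_pos hk]
      · have h1 : ¬ (p - d < p - d) := by omega
        simp only [if_neg h1, eq_self_iff_true, if_true]
        rw [gen_inl_mul, mul_assoc]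
    rw [hhead]
    -- final algebra
    have hmid : ((List.range d).map fun k =>
          gen A B φ (Sum.inr (iu (p - d + k))) ^ eu (p - d + k) *
            gen A B φ (Sum.inl (u (p - d + k + 1)))).prod *
        ((List.range d).map fun k =>
          gen A B φ (Sum.inl (v k)) * gen A B φ (Sum.inr (iv k)) ^ ev k).prod
        = gen A B φ (Sum.inl c) := hcmid
    have hx : gen A B φ (Sum.inl (c * v d)) = gen A B φ (Sum.inl c) *
        gen A B φ (Sum.inl (v d)) := (gen_inl_mul A B φ c (v d)).symm
    rw [hx, ← hmid]
    simp [mul_assoc]
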